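/- Let X₁,…,Xₙ be real random variables with |Xᵢ| ≤ Kᵢ almost surely and E[X_{i₁} X_{i₂} ⋯ X_{i_k}] = 0 for every k ≥ 1 and every increasing sequence i₁ < ⋯ < i_k. Then for every λ ∈ ℝ, E[exp(λ Σᵢ Xᵢ)] ≤ exp((λ²/2) Σᵢ Kᵢ²). -/

import Mathlib

open MeasureTheory
lemma exp_le_cosh_add_mul_sinh (t x : ℝ) (hx : |x| ≤ 1) :
    Real.exp (t * x) ≤ Real.cosh t + x * Real.sinh t := by
  rw [abs_le] at hx
  have h := convexOn_exp.2 (Set.mem_univ (-t)) (Set.mem_univ t)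
    (show (0:ℝ) ≤ (1 - x) / 2 by linarith) (show (0:ℝ) ≤ (1 + x) / 2 by linarith)
    (by ring)
  simp only [smul_eq_mul] at h
  have harg : (1 - x) / 2 * (-t) + (1 + x) / 2 * t = t * x := by ring
  rw [harg] at h
  calc Real.exp (t * x) ≤ (1 - x) / 2 * Real.exp (-t) + (1 + x) / 2 * Real.exp t := h
    _ = Real.cosh t + x * Real.sinh t := by rw [Real.cosh_eq, Real.sinh_eq]; ring

lemma integrable_of_ae_bound' {Ω : Type*} [MeasurableSpace Ω] (μ : Measure Ω)
    [IsFiniteMeasure μ] {f : Ω → ℝ} (hf : Measurable f) {C : ℝ}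
    (h : ∀ᵐ ω ∂μ, |f ω| ≤ C) : Integrable f μ :=
  ⟨hf.aestronglyMeasurable, HasFiniteIntegral.of_bounded (h.mono fun ω hω => by simpa using hω)⟩

theorem azuma_exponential_moment {Ω : Type*} [MeasurableSpace Ω] (μ : Measure Ω)
    [IsProbabilityMeasure μ] (n : ℕ) (X : Fin n → Ω → ℝ) (K : Fin n → ℝ)
    (hmeas : ∀ i, Measurable (X i))
    (hbdd : ∀ i, ∀ᵐ ω ∂μ, |X i ω| ≤ K i)
    (horth : ∀ s : Finset (Fin n), s.Nonempty → ∫ ω, (∏ i ∈ s, X i ω) ∂μ = 0)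
    (lam : ℝ) :
    ∫ ω, Real.exp (lam * ∑ i, X i ω) ∂μ ≤ Real.exp (lam ^ 2 / 2 * ∑ i, (K i) ^ 2) := by
  classical
  have hne : μ ≠ 0 := IsProbabilityMeasure.ne_zero μ
  have : (ae μ).NeBot := ae_neBot.mpr hne
  have hK : ∀ i, 0 ≤ K i := fun i => by
    obtain ⟨ω, hω⟩ := (hbdd i).exists
    exact (abs_nonneg _).trans hω
  set c : Fin n → ℝ := fun i => Real.cosh (lam * K i) with hc
  set s : Fin n → ℝ := fun i => if K i = 0 then 0 else Real.sinh (lam * K i) / K i with hs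
  have hae : ∀ᵐ ω ∂μ, ∀ i, |X i ω| ≤ K i := ae_all_iff.mpr hbdd
  -- pointwise bound
  have hpt : ∀ᵐ ω ∂μ, Real.exp (lam * ∑ i, X i ω) ≤ ∏ i, (c i + s i * X i ω) := by
    filter_upwards [hae] with ω hω
    rw [Finset.mul_sum, Real.exp_sum]
    refine Finset.prod_le_prod (fun i _ => (Real.exp_pos _).le) (fun i _ => ?_)
    by_cases h0 : K i = 0
    · have hx : X i ω = 0 := by
        have := hω i
        rw [h0] at this
        exact abs_eq_zero.mp (le_antisymm this (abs_nonneg _))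
      simp [hx, h0, hs, hc]
    · have hKpos : 0 < K i := (hK i).lt_of_ne (Ne.symm h0)
      have hx1 : |X i ω / K i| ≤ 1 := by
        rw [abs_div, abs_of_pos hKpos]
        exact (div_le_one hKpos).mpr (hω i)
      have h := exp_le_cosh_add_mul_sinh (lam * K i) (X i ω / K i) hx1
      have harg : lam * K i * (X i ω / K i) = lam * X i ω := by field_simp
      rw [harg] at h
      simp only [hs, h0, if_false, hc]
      calc Real.exp (lam * X i ω)
          ≤ Real.cosh (lam * K i) + X i ω / K i * Real.sinh (lam * K i) := h
        _ = Real.cosh (lam * K i) + Real.sinh (lam * K i) / K i * X i ω := by ring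
  -- integrability facts
  have hXint : ∀ u : Finset (Fin n), Integrable (fun ω => ∏ i ∈ u, X i ω) μ := by
    intro u
    refine integrable_of_ae_bound' μ (Finset.measurable_prod _ fun i _ => hmeas i)
      (C := ∏ i ∈ u, K i) ?_
    filter_upwards [hae] with ω hω
    calc |∏ i ∈ u, X i ω| = ∏ i ∈ u, |X i ω| := by rw [Finset.abs_prod]
      _ ≤ ∏ i ∈ u, K i := Finset.prod_le_prod (fun _ _ => abs_nonneg _) (fun i _ => hω i)
  have hgint : Integrable (fun ω => ∏ i, (c i + s i * X i ω)) μ := by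
    refine integrable_of_ae_bound' μ
      (Finset.measurable_prod _ fun i _ => measurable_const.add (measurable_const.mul (hmeas i)))
      (C := ∏ i, (|c i| + |s i| * K i)) ?_
    filter_upwards [hae] with ω hω
    calc |∏ i, (c i + s i * X i ω)| = ∏ i, |c i + s i * X i ω| := by rw [Finset.abs_prod]
      _ ≤ ∏ i, (|c i| + |s i| * K i) := by
          refine Finset.prod_le_prod (fun _ _ => abs_nonneg _) (fun i _ => ?_)
          calc |c i + s i * X i ω| ≤ |c i| + |s i * X i ω| := abs_add_le _ _
            _ = |c i| + |s i| * |X i ω| := by rw [abs_mul]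
            _ ≤ |c i| + |s i| * K i := by
                have := hω i
                nlinarith [abs_nonneg (s i), abs_nonneg (X i ω)]
  have hLint : Integrable (fun ω => Real.exp (lam * ∑ i, X i ω)) μ := by
    refine integrable_of_ae_bound' μ (by measurability) (C := Real.exp (|lam| * ∑ i, K i)) ?_
    filter_upwards [hae] with ω hω
    rw [abs_of_pos (Real.exp_pos _)]
    apply Real.exp_le_exp.mpr
    calc lam * ∑ i, X i ω ≤ |lam * ∑ i, X i ω| := le_abs_self _
      _ = |lam| * |∑ i, X i ω| := abs_mul _ _
      _ ≤ |lam| * ∑ i, K i := by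
          refine mul_le_mul_of_nonneg_left ?_ (abs_nonneg _)
          calc |∑ i, X i ω| ≤ ∑ i, |X i ω| := Finset.abs_sum_le_sum_abs _ _
            _ ≤ ∑ i, K i := Finset.sum_le_sum (fun i _ => hω i)
  have step1 : ∫ ω, Real.exp (lam * ∑ i, X i ω) ∂μ ≤ ∫ ω, ∏ i, (c i + s i * X i ω) ∂μ :=
    integral_mono_ae hLint hgint hpt
  have step2 : ∫ ω, ∏ i, (c i + s i * X i ω) ∂μ = ∏ i, c i := by
    have expand : ∀ ω : Ω, ∏ i, (c i + s i * X i ω) =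
        ∑ t ∈ Finset.univ.powerset, ((∏ i ∈ t, c i) * ∏ i ∈ Finset.univ \ t, s i) *
          ∏ i ∈ Finset.univ \ t, X i ω := by
      intro ω
      rw [Finset.prod_add]
      refine Finset.sum_congr rfl (fun t _ => ?_)
      rw [Finset.prod_mul_distrib, mul_assoc]
    simp_rw [expand]
    rw [integral_finset_sum _ (fun t _ => (hXint _).const_mul _)]
    have : ∀ t ∈ Finset.univ.powerset, (∫ ω, ((∏ i ∈ t, c i) * ∏ i ∈ Finset.univ \ t, s i) *
        ∏ i ∈ Finset.univ \ t, X i ω ∂μ) =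
        if t = Finset.univ then ∏ i, c i else 0 := by
      intro t ht
      rw [integral_const_mul]
      by_cases htu : t = Finset.univ
      · simp [htu]
      · have hne' : (Finset.univ \ t).Nonempty := by
          rw [Finset.sdiff_nonempty]
          exact fun h => htu (Finset.univ_subset_iff.mp h)
        rw [if_neg htu, horth _ hne', mul_zero]
    rw [Finset.sum_congr rfl this]
    simp
  have step3 : ∏ i, c i ≤ Real.exp (lam ^ 2 / 2 * ∑ i, (K i) ^ 2) := by
    calc ∏ i, c i ≤ ∏ i, Real.exp ((lam * K i) ^ 2 / 2) :=
        Finset.prod_le_prod (fun i _ => (Real.cosh_pos _).le)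
          (fun i _ => Real.cosh_le_exp_half_sq _)
      _ = Real.exp (∑ i, (lam * K i) ^ 2 / 2) := by rw [Real.exp_sum]
      _ = Real.exp (lam ^ 2 / 2 * ∑ i, (K i) ^ 2) := by
          congr 1
          rw [Finset.mul_sum]
          exact Finset.sum_congr rfl (fun i _ => by ring)
  calc ∫ ω, Real.exp (lam * ∑ i, X i ω) ∂μ ≤ ∫ ω, ∏ i, (c i + s i * X i ω) ∂μ := step1
    _ = ∏ i, c i := step2
    _ ≤ _ := step3
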